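/- Let p > 3 be a prime and let x, y ∈ C(p) be maximal triples with maximal indices i and j respectively. Then there exists a maximal triple z ∈ C(p) and an index k ∈ {1,2,3} such that C_i(x_i) ∩ C_k(z_k) ≠ ∅ and C_j(y_j) ∩ C_k(z_k) ≠ ∅. -/

import Mathlib

namespace Markoff

variable {R : Type*} [CommRing R]

/-- The three rotations acting on triples. -/
def rot (i : Fin 3) : R × R × R → R × R × R :=
  ![fun x => (x.1, x.2.2, 3 * x.1 * x.2.2 - x.2.1),
    fun x => (x.2.2, x.2.1, 3 * x.2.1 * x.2.2 - x.1),
    fun x => (x.2.1, 3 * x.2.1 * x.2.2 - x.1, x.2.2)] i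

/-- The `i`-th coordinate of a triple. -/
def coord (i : Fin 3) (x : R × R × R) : R := ![x.1, x.2.1, x.2.2] i

/-- The Markoff equation. -/
def IsMarkoff (x : R × R × R) : Prop :=
  x.1 ^ 2 + x.2.1 ^ 2 + x.2.2 ^ 2 = 3 * x.1 * x.2.1 * x.2.2

/-- The nonzero Markoff points mod `p`. -/
def Xstar (p : ℕ) : Set (ZMod p × ZMod p × ZMod p) :=
  {x | IsMarkoff x ∧ x ≠ (0, 0, 0)}

/-- The rotations as permutations. -/
def rotPerm (i : Fin 3) : Equiv.Perm (R × R × R) where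
  toFun := rot i
  invFun := ![fun y => (y.1, 3 * y.1 * y.2.1 - y.2.2, y.2.1),
              fun y => (3 * y.1 * y.2.1 - y.2.2, y.2.1, y.1),
              fun y => (3 * y.1 * y.2.2 - y.2.1, y.1, y.2.2)] i
  left_inv := by
    fin_cases i <;> rintro ⟨a, b, c⟩ <;>
      simp [rot, Matrix.cons_val_zero, Matrix.cons_val_one] <;> ring
  right_inv := by
    fin_cases i <;> rintro ⟨a, b, c⟩ <;>
      simp [rot, Matrix.cons_val_zero, Matrix.cons_val_one] <;> ring

/-- The `i`-th rotation order: the least `n > 0` with `rot i ^[n] x = x`. -/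
noncomputable def ordi (p : ℕ) (i : Fin 3) (x : ZMod p × ZMod p × ZMod p) : ℕ :=
  sInf {n | 0 < n ∧ (rot i)^[n] x = x}

/-- The rotation order: max of the three rotation orders. -/
noncomputable def ordp (p : ℕ) (x : ZMod p × ZMod p × ZMod p) : ℕ :=
  max (ordi p 0 x) (max (ordi p 1 x) (ordi p 2 x))

/-- The size of an integer triple. -/
def size (x : ℤ × ℤ × ℤ) : ℤ := max x.1 (max x.2.1 x.2.2)

/-- `t` is a lift of `x` mod `p`. -/
def IsLift (p : ℕ) (t : ℤ × ℤ × ℤ) (x : ZMod p × ZMod p × ZMod p) : Prop :=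
  IsMarkoff t ∧ ((t.1 : ZMod p), (t.2.1 : ZMod p), (t.2.2 : ZMod p)) = x

noncomputable def eps : ℝ := (3 + Real.sqrt 5) / 2

/-- Apply a word of rotations: `rotWord [(i₁,n₁),…,(i_s,n_s)] x = rot_{i_s}^{n_s} ⋯ rot_{i_1}^{n_1} x`. -/
def rotWord (w : List (Fin 3 × ℕ)) (x : R × R × R) : R × R × R :=
  w.foldl (fun y q => (rot q.1)^[q.2] y) x

/-- `x` is a maximal triple. -/
def IsMax (p : ℕ) (x : ZMod p × ZMod p × ZMod p) : Prop :=
  ∃ i : Fin 3, ordi p i x = p - 1 ∨ ordi p i x = p + 1 ∨ ordi p i x = 2 * p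

/-- The cage: maximal triples in `X*(p)`. -/
def Cage (p : ℕ) : Set (ZMod p × ZMod p × ZMod p) :=
  {x ∈ Xstar p | IsMax p x}

/-- The conic section `C_i(a)`. -/
def Ci (p : ℕ) (i : Fin 3) (a : ZMod p) : Set (ZMod p × ZMod p × ZMod p) :=
  {x ∈ Xstar p | coord i x = a}



def step (a : R) (w : R × R) : R × R := (w.2, 3 * a * w.2 - w.1)

def Conic (a : R) (w : R × R) : Prop := w.1 ^ 2 + w.2 ^ 2 + a ^ 2 = 3 * a * w.1 * w.2

def Good (a : R) (w : R × R) : Prop := Conic a w ∧ ¬(a = 0 ∧ w = 0)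

def emb (i : Fin 3) (a : R) (w : R × R) : R × R × R :=
  ![(a, w.1, w.2), (w.1, a, w.2), (w.1, w.2, a)] i

def proj (i : Fin 3) (x : R × R × R) : R × R :=
  ![(x.2.1, x.2.2), (x.1, x.2.2), (x.1, x.2.1)] i

omit [CommRing R] in
lemma emb_proj (i : Fin 3) (x : R × R × R) : emb i (coord i x) (proj i x) = x := by
  fin_cases i <;> rfl

omit [CommRing R] in
lemma coord_emb (i : Fin 3) (a : R) (w : R × R) : coord i (emb i a w) = a := by
  fin_cases i <;> rfl

lemma markoff_emb (i : Fin 3) (a : R) (w : R × R) :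
    IsMarkoff (emb i a w) ↔ Conic a w := by
  fin_cases i <;>
    (simp [emb, IsMarkoff, Conic]; constructor <;> intro h <;> linear_combination h)

lemma emb_eq_zero (i : Fin 3) (a : R) (w : R × R) :
    emb i a w = (0, 0, 0) ↔ a = 0 ∧ w = 0 := by
  fin_cases i <;> simp [emb, Prod.ext_iff] <;> tauto

lemma rot_emb (i : Fin 3) (a : R) (w : R × R) :
    rot i (emb i a w) = emb i a (step a w) := by
  fin_cases i <;> simp [emb, rot, step, Prod.ext_iff] <;> ring

lemma rot_iterate_emb (i : Fin 3) (a : R) (w : R × R) (n : ℕ) :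
    (rot i)^[n] (emb i a w) = emb i a ((step a)^[n] w) := by
  induction n with
  | zero => rfl
  | succ n ih =>
    rw [Function.iterate_succ_apply', ih, rot_emb,
      show (step a)^[n + 1] w = step a ((step a)^[n] w) from Function.iterate_succ_apply' _ _ _]

omit [CommRing R] in
lemma emb_inj (i : Fin 3) (a : R) {w w' : R × R} (h : emb i a w = emb i a w') : w = w' := by
  fin_cases i <;>
    · simp only [emb, Matrix.cons_val_zero, Matrix.cons_val_one, Matrix.head_cons,
        Matrix.cons_val_two, Matrix.tail_cons, Prod.ext_iff] at h
      exact Prod.ext (by tauto) (by tauto)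

section FieldPart

variable {F : Type*} [Field F]

def cheb (a : F) : ℕ → F
  | 0 => -1
  | 1 => 0
  | (n + 2) => 3 * a * cheb a (n + 1) - cheb a n

lemma cheb_succ_succ (a : F) (n : ℕ) :
    cheb a (n + 2) = 3 * a * cheb a (n + 1) - cheb a n := rfl

lemma step_iterate (a : F) (w : F × F) (n : ℕ) :
    (step a)^[n] w =
      (cheb a (n + 1) * w.2 - cheb a n * w.1, cheb a (n + 2) * w.2 - cheb a (n + 1) * w.1) := by
  induction n with
  | zero =>
    simp only [Function.iterate_zero, id_eq, cheb, cheb_succ_succ]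
    apply Prod.ext <;> simp
  | succ n ih =>
    rw [Function.iterate_succ_apply', ih]
    apply Prod.ext
    · simp [step]
    · show 3 * a * (cheb a (n + 2) * w.2 - cheb a (n + 1) * w.1) -
        (cheb a (n + 1) * w.2 - cheb a n * w.1) = _
      rw [cheb_succ_succ a (n + 1), cheb_succ_succ a n]
      ring

lemma period_iff {a : F} (ha : a ≠ 0) {w : F × F} (hw : Conic a w) (n : ℕ) :
    (step a)^[n] w = w ↔ (cheb a (n + 1) = 0 ∧ cheb a n = -1) := by
  obtain ⟨u, v⟩ := w
  have hw' : u ^ 2 + v ^ 2 + a ^ 2 = 3 * a * u * v := hw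
  rw [step_iterate, Prod.ext_iff]
  simp only
  set C0 := cheb a n with hC0def
  set C1 := cheb a (n + 1) with hC1def
  have hC2 : cheb a (n + 2) = 3 * a * C1 - C0 := cheb_succ_succ a n
  constructor
  · rintro ⟨h1, h2⟩
    by_cases hc1 : C1 = 0
    · refine ⟨hc1, ?_⟩
      by_contra hC0ne
      have h10 : 1 + C0 ≠ 0 := fun h => hC0ne (by linear_combination h)
      have hu : (1 + C0) * u = 0 := by linear_combination v * hc1 - h1
      have hv : (1 + C0) * v = 0 := by linear_combination -h2 + v * hC2 + (3 * a * v - u) * hc1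
      have hu0 : u = 0 := (mul_eq_zero.1 hu).resolve_left h10
      have hv0 : v = 0 := (mul_eq_zero.1 hv).resolve_left h10
      apply ha
      have : a ^ 2 = 0 := by linear_combination hw' + (3 * a * v - u) * hu0 - v * hv0
      exact pow_eq_zero_iff (n := 2) (by norm_num) |>.1 this
    · exfalso
      have hu0 : u ≠ 0 := by
        intro h
        have hv1 : C1 * v = 0 := by linear_combination h1 + (C0 + 1) * h
        have hv0 : v = 0 := (mul_eq_zero.1 hv1).resolve_left hc1
        apply ha
        have h2' : a ^ 2 = 0 := by linear_combination hw' + (3 * a * v - u) * h - v * hv0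
        exact pow_eq_zero_iff (n := 2) (by norm_num) |>.1 h2'
      have keyu : u * ((1 + C0) ^ 2 - 3 * a * (1 + C0) * C1 + C1 ^ 2) = 0 := by
        linear_combination (3 * a * C1 - (1 + C0)) * h1 - C1 * h2 + C1 * v * hC2
      have key : (1 + C0) ^ 2 - 3 * a * (1 + C0) * C1 + C1 ^ 2 = 0 :=
        (mul_eq_zero.1 keyu).resolve_left hu0
      have final : a ^ 2 * C1 ^ 2 = 0 := by
        linear_combination C1 ^ 2 * hw' - u ^ 2 * key +
          (3 * a * u * C1 - 2 * (1 + C0) * u - (C1 * v - C0 * u - u)) * h1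
      have hac : a * C1 = 0 := by
        have h' : (a * C1) ^ 2 = 0 := by linear_combination final
        exact pow_eq_zero_iff (n := 2) (by norm_num) |>.1 h'
      rcases mul_eq_zero.1 hac with h | h
      · exact ha h
      · exact hc1 h
  · rintro ⟨hc1, hc0⟩
    constructor
    · linear_combination v * hc1 - u * hc0
    · linear_combination v * hC2 + (3 * a * v - u) * hc1 - v * hc0
lemma cheb_zero (n : ℕ) :
    cheb (0 : F) n = if n % 4 = 0 then -1 else if n % 4 = 2 then 1 else 0 := by
  induction n using Nat.twoStepInduction with
  | zero => norm_num [cheb]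
  | one => norm_num [cheb]
  | more n ih _ =>
    rw [cheb_succ_succ, ih]
    have h4 : (n + 2) % 4 = (n % 4 + 2) % 4 := by omega
    rcases (show n % 4 = 0 ∨ n % 4 = 1 ∨ n % 4 = 2 ∨ n % 4 = 3 by omega) with h | h | h | h <;>
      rw [h4, h] <;> norm_num

lemma period_zero_iff (h2 : (2 : F) ≠ 0) {w : F × F} (hw : w ≠ 0) (n : ℕ) :
    (step (0 : F))^[n] w = w ↔ n % 4 = 0 := by
  obtain ⟨u, v⟩ := w
  have hne : ¬(u = 0 ∧ v = 0) := by simpa [Prod.ext_iff] using hw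
  have e1 : (n + 1) % 4 = (n % 4 + 1) % 4 := by omega
  have e2 : (n + 2) % 4 = (n % 4 + 2) % 4 := by omega
  rw [step_iterate, Prod.ext_iff]
  simp only
  rcases (show n % 4 = 0 ∨ n % 4 = 1 ∨ n % 4 = 2 ∨ n % 4 = 3 by omega) with h | h | h | h
  · have hv1 : cheb (0 : F) n = -1 := by rw [cheb_zero, h]; norm_num
    have hv2 : cheb (0 : F) (n + 1) = 0 := by rw [cheb_zero, e1, h]; norm_num
    have hv3 : cheb (0 : F) (n + 2) = 1 := by rw [cheb_zero, e2, h]; norm_num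
    rw [hv1, hv2, hv3, h]
    constructor
    · intro _; rfl
    · intro _; constructor <;> ring
  · have hv1 : cheb (0 : F) n = 0 := by rw [cheb_zero, h]; norm_num
    have hv2 : cheb (0 : F) (n + 1) = 1 := by rw [cheb_zero, e1, h]; norm_num
    have hv3 : cheb (0 : F) (n + 2) = 0 := by rw [cheb_zero, e2, h]; norm_num
    rw [hv1, hv2, hv3, h]
    simp only [Nat.one_ne_zero, iff_false]
    rintro ⟨ha1, ha2⟩
    have hu : u = 0 := by
      have hh : (2 : F) * u = 0 := by linear_combination -ha1 - ha2
      exact (mul_eq_zero.1 hh).resolve_left h2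
    have hv : v = 0 := by linear_combination ha1 + hu
    exact hne ⟨hu, hv⟩
  · have hv1 : cheb (0 : F) n = 1 := by rw [cheb_zero, h]; norm_num
    have hv2 : cheb (0 : F) (n + 1) = 0 := by rw [cheb_zero, e1, h]; norm_num
    have hv3 : cheb (0 : F) (n + 2) = -1 := by rw [cheb_zero, e2, h]; norm_num
    rw [hv1, hv2, hv3, h]
    constructor
    swap
    · intro hh; exact absurd hh (by norm_num)
    rintro ⟨ha1, ha2⟩
    exfalso
    have hu : u = 0 := by
      have hh : (2 : F) * u = 0 := by linear_combination -ha1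
      exact (mul_eq_zero.1 hh).resolve_left h2
    have hv : v = 0 := by
      have hh : (2 : F) * v = 0 := by linear_combination -ha2
      exact (mul_eq_zero.1 hh).resolve_left h2
    exact hne ⟨hu, hv⟩
  · have hv1 : cheb (0 : F) n = 0 := by rw [cheb_zero, h]; norm_num
    have hv2 : cheb (0 : F) (n + 1) = -1 := by rw [cheb_zero, e1, h]; norm_num
    have hv3 : cheb (0 : F) (n + 2) = 0 := by rw [cheb_zero, e2, h]; norm_num
    rw [hv1, hv2, hv3, h]
    constructor
    swap
    · intro hh; exact absurd hh (by norm_num)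
    rintro ⟨ha1, ha2⟩
    exfalso
    have hv : v = 0 := by
      have hh : (2 : F) * v = 0 := by linear_combination -ha1 - ha2
      exact (mul_eq_zero.1 hh).resolve_left h2
    have hu : u = 0 := by linear_combination -ha1 - (1 : F) * hv
    exact hne ⟨hu, hv⟩

lemma periodSet_const (h2 : (2 : F) ≠ 0) {a : F} {w w' : F × F}
    (hw : Good a w) (hw' : Good a w') :
    {n : ℕ | 0 < n ∧ (step a)^[n] w = w} = {n | 0 < n ∧ (step a)^[n] w' = w'} := by
  by_cases ha : a = 0
  · subst ha
    have h1 : w ≠ 0 := fun h => hw.2 ⟨rfl, h⟩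
    have h1' : w' ≠ 0 := fun h => hw'.2 ⟨rfl, h⟩
    ext n
    simp only [Set.mem_setOf_eq, period_zero_iff h2 h1, period_zero_iff h2 h1']
  · ext n
    simp only [Set.mem_setOf_eq, period_iff ha hw.1, period_iff ha hw'.1]
lemma conic_of_sq (h2 : (2 : F) ≠ 0) {a u t : F} (ht : t ^ 2 = (9 * a ^ 2 - 4) * u ^ 2 - 4 * a ^ 2) :
    Conic a (u, (3 * a * u + t) * (2 : F)⁻¹) := by
  show u ^ 2 + ((3 * a * u + t) * (2 : F)⁻¹) ^ 2 + a ^ 2 =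
    3 * a * u * ((3 * a * u + t) * (2 : F)⁻¹)
  field_simp
  linear_combination ht

lemma sq_of_conic {a u v : F} (hw : Conic a (u, v)) :
    (2 * v - 3 * a * u) ^ 2 = (9 * a ^ 2 - 4) * u ^ 2 - 4 * a ^ 2 := by
  have hw' : u ^ 2 + v ^ 2 + a ^ 2 = 3 * a * u * v := hw
  linear_combination (4 : F) * hw'

section Count

variable {p : ℕ} [Fact p.Prime]

open Classical in
noncomputable def Sset (p : ℕ) [Fact p.Prime] (a : ZMod p) : Finset (ZMod p) :=
  Finset.univ.filter (fun u => ∃ v, Good a (u, v))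

lemma mem_Sset {a u : ZMod p} : u ∈ Sset p a ↔ ∃ v, Good a (u, v) := by
  classical
  simp [Sset]

lemma two_ne_zero' (hp3 : 3 < p) : (2 : ZMod p) ≠ 0 := by
  have := ZMod.natCast_eq_zero_iff 2 p
  intro h
  rw [show ((2 : ZMod p)) = ((2 : ℕ) : ZMod p) by push_cast; ring, this] at h
  have hp := (Fact.out : p.Prime)
  exact absurd (Nat.le_of_dvd (by norm_num) h) (by omega)

lemma two_mul_card_Sset (hp3 : 3 < p) {a : ZMod p} (h : ∃ w, Good a w) :
    p + 1 ≤ 2 * (Sset p a).card := by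
  obtain ⟨⟨u0, v0⟩, hg⟩ := h
  have hconic : u0 ^ 2 + v0 ^ 2 + a ^ 2 = 3 * a * u0 * v0 := hg.1
  have h2 : (2 : ZMod p) ≠ 0 := two_ne_zero' hp3
  have hcard : Fintype.card (ZMod p) = p := ZMod.card p
  by_cases ha : a = 0
  · -- a = 0 : all nonzero u work
    subst ha
    have hu0 : u0 ≠ 0 := by
      intro h0
      have hv2 : v0 ^ 2 = 0 := by linear_combination hconic - (u0 + 3 * 0 * v0) * h0
      have hv0 : v0 = 0 := by
        exact pow_eq_zero_iff (n := 2) (by norm_num) |>.1 hv2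
      exact hg.2 ⟨rfl, by simp [Prod.ext_iff, h0, hv0]⟩
    have hsub : Finset.univ.erase (0 : ZMod p) ⊆ Sset p 0 := by
      intro u hu
      have hu' : u ≠ 0 := (Finset.mem_erase.1 hu).1
      rw [mem_Sset]
      refine ⟨u * v0 * u0⁻¹, ⟨?_, ?_⟩⟩
      · show u ^ 2 + (u * v0 * u0⁻¹) ^ 2 + (0 : ZMod p) ^ 2 = 3 * 0 * u * (u * v0 * u0⁻¹)
        field_simp
        linear_combination u ^ 2 * hconic
      · rintro ⟨-, hw0⟩
        rw [Prod.ext_iff] at hw0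
        exact hu' hw0.1
    have hcle : p - 1 ≤ (Sset p 0).card := by
      have := Finset.card_le_card hsub
      rwa [Finset.card_erase_of_mem (Finset.mem_univ _), Finset.card_univ, hcard] at this
    omega
  · by_cases hD : 9 * a ^ 2 - 4 = 0
    · -- degenerate D = 0 : every u works
      have ht0 : (2 * v0 - 3 * a * u0) ^ 2 = (9 * a ^ 2 - 4) * u0 ^ 2 - 4 * a ^ 2 :=
        sq_of_conic hg.1
      have hsub : (Finset.univ : Finset (ZMod p)) ⊆ Sset p a := by
        intro u _
        rw [mem_Sset]
        have htu : (2 * v0 - 3 * a * u0) ^ 2 = (9 * a ^ 2 - 4) * u ^ 2 - 4 * a ^ 2 := by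
          linear_combination ht0 + (u0 ^ 2 - u ^ 2) * hD
        exact ⟨_, conic_of_sq h2 htu, fun hc => ha hc.1⟩
      have hcle : p ≤ (Sset p a).card := by
        have := Finset.card_le_card hsub
        rwa [Finset.card_univ, hcard] at this
      omega
    · -- nondegenerate case
      set D : ZMod p := 9 * a ^ 2 - 4 with hDdef
      have ha2 : a ^ 2 ≠ 0 := pow_ne_zero _ ha
      have h4 : (4 : ZMod p) ≠ 0 := by
        intro h4
        exact h2 (by rcases mul_eq_zero.1 (show (2 : ZMod p) * 2 = 0 by linear_combination h4) with h | h <;> exact h)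
      have he : (4 : ZMod p) * a ^ 2 ≠ 0 := mul_ne_zero h4 ha2
      have hmemT : ∀ m : ZMod p, m ≠ 0 → m ∈ Finset.univ.erase (0 : ZMod p) :=
        fun m hm => Finset.mem_erase.2 ⟨hm, Finset.mem_univ _⟩
      have hTcard : (Finset.univ.erase (0 : ZMod p)).card = p - 1 := by
        rw [Finset.card_erase_of_mem (Finset.mem_univ _), Finset.card_univ, hcard]
      by_cases hsq : IsSquare D
      · -- split case
        obtain ⟨s, hs⟩ := hsq
        have hs0 : s ≠ 0 := by intro h0; exact hD (by rw [hs, h0, mul_zero])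
        have h2s : (2 : ZMod p) * s ≠ 0 := mul_ne_zero h2 hs0
        set ψ : ZMod p → ZMod p := fun m => (m + 4 * a ^ 2 * m⁻¹) * ((2 : ZMod p) * s)⁻¹ with hψ
        have hmem : ∀ m : ZMod p, m ≠ 0 → ψ m ∈ Sset p a := by
          intro m hm
          rw [mem_Sset]
          have htm : ((m - 4 * a ^ 2 * m⁻¹) * (2 : ZMod p)⁻¹) ^ 2
              = (9 * a ^ 2 - 4) * (ψ m) ^ 2 - 4 * a ^ 2 := by
            rw [← hDdef, hs, hψ]
            simp only
            field_simp
            ring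
          exact ⟨_, conic_of_sq h2 htm, fun hc => ha hc.1⟩
        have hfib : ∀ m : ZMod p, m ≠ 0 → ∀ m' : ZMod p, m' ≠ 0 → ψ m = ψ m' →
            m' = m ∨ m' = 4 * a ^ 2 * m⁻¹ := by
          intro m hm m' hm' heq
          have heq' : m + 4 * a ^ 2 * m⁻¹ = m' + 4 * a ^ 2 * m'⁻¹ :=
            mul_right_cancel₀ (inv_ne_zero h2s) heq
          field_simp at heq'
          have hkey : (m - m') * (m * m' - 4 * a ^ 2) = 0 := by linear_combination heq'
          rcases mul_eq_zero.1 hkey with h | h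
          · left; linear_combination -h
          · right; field_simp; linear_combination h
        have h2a0 : (2 : ZMod p) * a ≠ 0 := mul_ne_zero h2 ha
        have h4a : (4 : ZMod p) * a ≠ 0 := mul_ne_zero h4 ha
        have hinv2a : (4 : ZMod p) * a ^ 2 * ((2 : ZMod p) * a)⁻¹ = 2 * a := by
          field_simp; ring
        have hinvneg : (4 : ZMod p) * a ^ 2 * (-((2 : ZMod p) * a))⁻¹ = -(2 * a) := by
          field_simp; ring
        have hψdiff : ψ (2 * a) ≠ ψ (-(2 * a)) := by
          intro hψe
          rcases hfib (2 * a) h2a0 (-(2 * a)) (neg_ne_zero.2 h2a0) hψe with h | h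
          · exact h4a (by linear_combination -h)
          · rw [hinv2a] at h
            exact h4a (by linear_combination -h)
        set T2 : Finset (ZMod p) :=
          ((Finset.univ.erase (0 : ZMod p)).erase (2 * a)).erase (-(2 * a)) with hT2
        have hT2sub : T2 ⊆ Finset.univ.erase (0 : ZMod p) :=
          (Finset.erase_subset _ _).trans (Finset.erase_subset _ _)
        have hT2card : p - 3 ≤ T2.card := by
          have e2 := Finset.pred_card_le_card_erase
            (s := (Finset.univ.erase (0 : ZMod p)).erase (2 * a)) (a := -(2 * a))
          have e3 := Finset.pred_card_le_card_erase
            (s := Finset.univ.erase (0 : ZMod p)) (a := 2 * a)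
          rw [hT2]
          omega
        have himle : T2.card ≤ 2 * (T2.image ψ).card := by
          apply Finset.card_le_mul_card_image
          intro b hb
          obtain ⟨m, hm, rfl⟩ := Finset.mem_image.1 hb
          have hm0 : m ≠ 0 := (Finset.mem_erase.1 (hT2sub hm)).1
          have hsubfil : T2.filter (fun x => ψ x = ψ m) ⊆ {m, 4 * a ^ 2 * m⁻¹} := by
            intro x hx
            rcases Finset.mem_filter.1 hx with ⟨hxT, hxe⟩
            have hx0 : x ≠ 0 := (Finset.mem_erase.1 (hT2sub hxT)).1
            rcases hfib m hm0 x hx0 hxe.symm with h | h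
            · exact Finset.mem_insert.2 (Or.inl h)
            · exact Finset.mem_insert.2 (Or.inr (Finset.mem_singleton.2 h))
          calc (T2.filter (fun x => ψ x = ψ m)).card
              ≤ ({m, 4 * a ^ 2 * m⁻¹} : Finset (ZMod p)).card := Finset.card_le_card hsubfil
            _ ≤ 2 := (Finset.card_insert_le _ _).trans (by simp)
        have hnot1 : ψ (2 * a) ∉ T2.image ψ := by
          intro hmem'
          obtain ⟨m, hmT, hme⟩ := Finset.mem_image.1 hmem'
          have hm0 : m ≠ 0 := (Finset.mem_erase.1 (hT2sub hmT)).1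
          have hmne : m ≠ 2 * a := (Finset.mem_erase.1 (Finset.mem_of_mem_erase hmT)).1
          rcases hfib (2 * a) h2a0 m hm0 hme.symm with h | h
          · exact hmne h
          · rw [hinv2a] at h; exact hmne h
        have hnot2 : ψ (-(2 * a)) ∉ T2.image ψ := by
          intro hmem'
          obtain ⟨m, hmT, hme⟩ := Finset.mem_image.1 hmem'
          have hm0 : m ≠ 0 := (Finset.mem_erase.1 (hT2sub hmT)).1
          have hmne : m ≠ -(2 * a) := (Finset.mem_erase.1 hmT).1
          rcases hfib (-(2 * a)) (neg_ne_zero.2 h2a0) m hm0 hme.symm with h | h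
          · exact hmne h
          · rw [hinvneg] at h; exact hmne h
        have hins : insert (ψ (2 * a)) (insert (ψ (-(2 * a))) (T2.image ψ)) ⊆ Sset p a := by
          intro x hx
          rcases Finset.mem_insert.1 hx with rfl | hx
          · exact hmem _ h2a0
          rcases Finset.mem_insert.1 hx with rfl | hx
          · exact hmem _ (neg_ne_zero.2 h2a0)
          obtain ⟨m, hmT, rfl⟩ := Finset.mem_image.1 hx
          exact hmem _ ((Finset.mem_erase.1 (hT2sub hmT)).1)
        have hcins : (T2.image ψ).card + 2 ≤ (Sset p a).card := by
          have hc1 : (insert (ψ (2 * a)) (insert (ψ (-(2 * a))) (T2.image ψ))).card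
              = (T2.image ψ).card + 2 := by
            rw [Finset.card_insert_of_notMem (by simp [hψdiff, hnot1]),
              Finset.card_insert_of_notMem hnot2]
          rw [← hc1]
          exact Finset.card_le_card hins
        omega
      · -- nonsplit case
        have hDi : ¬IsSquare (D⁻¹) := by
          rintro ⟨c, hc⟩
          exact hsq ⟨c⁻¹, by rw [← mul_inv, ← hc, inv_inv]⟩
        set e' : ZMod p := 4 * a ^ 2 * D⁻¹ with he'def
        have he' : e' ≠ 0 := mul_ne_zero he (inv_ne_zero hD)
        have hsqe' : ¬IsSquare e' := by
          rintro ⟨c, hc⟩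
          have hc0 : c ≠ 0 := by
            rintro rfl
            rw [mul_zero] at hc
            exact he' hc
          apply hsq
          refine ⟨2 * a * c⁻¹, ?_⟩
          rw [he'def] at hc
          field_simp at hc ⊢
          linear_combination -hc
        set φ : ZMod p → ZMod p := fun m => (m + e' * m⁻¹) * (2 : ZMod p)⁻¹ with hφ
        have hfib2 : ∀ m : ZMod p, m ≠ 0 → ∀ m' : ZMod p, m' ≠ 0 → φ m = φ m' →
            m' = m ∨ m' = e' * m⁻¹ := by
          intro m hm m' hm' heq
          have heq' : m + e' * m⁻¹ = m' + e' * m'⁻¹ :=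
            mul_right_cancel₀ (inv_ne_zero h2) heq
          field_simp at heq'
          have hkey : (m - m') * (m * m' - e') = 0 := by linear_combination heq'
          rcases mul_eq_zero.1 hkey with h | h
          · left; linear_combination -h
          · right; field_simp; linear_combination h
        have hcompl : ∀ u : ZMod p, u ∉ Sset p a →
            u ∈ (Finset.univ.erase (0 : ZMod p)).image φ := by
          intro u hu
          have hns : ¬IsSquare (D * u ^ 2 - 4 * a ^ 2) := by
            rintro ⟨t, ht⟩
            apply hu
            rw [mem_Sset]
            have ht' : t ^ 2 = (9 * a ^ 2 - 4) * u ^ 2 - 4 * a ^ 2 := by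
              rw [← hDdef, pow_two]
              exact ht.symm
            exact ⟨_, conic_of_sq h2 ht', fun hc => ha hc.1⟩
          have hΔ0 : D * u ^ 2 - 4 * a ^ 2 ≠ 0 := by
            intro h0
            exact hns (by rw [h0]; exact ⟨0, by ring⟩)
          have hq1 : quadraticChar (ZMod p) (D * u ^ 2 - 4 * a ^ 2) = -1 :=
            quadraticChar_neg_one_iff_not_isSquare.2 hns
          have hq2 : quadraticChar (ZMod p) (D⁻¹) = -1 :=
            quadraticChar_neg_one_iff_not_isSquare.2 hDi
          have hq3 : quadraticChar (ZMod p) ((D * u ^ 2 - 4 * a ^ 2) * D⁻¹) = 1 := by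
            rw [map_mul, hq1, hq2]; norm_num
          have hsq3 : IsSquare ((D * u ^ 2 - 4 * a ^ 2) * D⁻¹) :=
            (quadraticChar_one_iff_isSquare (mul_ne_zero hΔ0 (inv_ne_zero hD))).1 hq3
          obtain ⟨c, hc⟩ := hsq3
          have hdiff : u ^ 2 - c ^ 2 = e' := by
            rw [he'def]
            field_simp at hc ⊢
            linear_combination hc
          have hm0 : u + c ≠ 0 := by
            intro h0
            apply he'
            rw [← hdiff]
            linear_combination (u - c) * h0
          refine Finset.mem_image.2 ⟨u + c, hmemT _ hm0, ?_⟩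
          have hrw : e' * (u + c)⁻¹ = u - c := by
            rw [← hdiff]
            field_simp
            ring
          show (u + c + e' * (u + c)⁻¹) * (2 : ZMod p)⁻¹ = u
          rw [hrw]
          field_simp
          ring
        have hfge : 2 * ((Finset.univ.erase (0 : ZMod p)).image φ).card
            ≤ (Finset.univ.erase (0 : ZMod p)).card := by
          apply Finset.mul_card_image_le_card
          intro b hb
          obtain ⟨m, hm, rfl⟩ := Finset.mem_image.1 hb
          have hm0 : m ≠ 0 := (Finset.mem_erase.1 hm).1
          have hne2 : m ≠ e' * m⁻¹ := by
            intro hh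
            apply hsqe'
            refine ⟨m, ?_⟩
            field_simp at hh
            linear_combination -hh
          have hsub2 : ({m, e' * m⁻¹} : Finset (ZMod p)) ⊆
              (Finset.univ.erase (0 : ZMod p)).filter (fun x => φ x = φ m) := by
            intro x hx
            rcases Finset.mem_insert.1 hx with rfl | hx
            · exact Finset.mem_filter.2 ⟨hm, rfl⟩
            rw [Finset.mem_singleton] at hx
            subst hx
            refine Finset.mem_filter.2 ⟨hmemT _ (mul_ne_zero he' (inv_ne_zero hm0)), ?_⟩
            show (e' * m⁻¹ + e' * (e' * m⁻¹)⁻¹) * (2 : ZMod p)⁻¹ = (m + e' * m⁻¹) * (2 : ZMod p)⁻¹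
            congr 1
            field_simp
            ring
          calc 2 = ({m, e' * m⁻¹} : Finset (ZMod p)).card := (Finset.card_pair hne2).symm
            _ ≤ _ := Finset.card_le_card hsub2
        have hcompl' : (Sset p a)ᶜ ⊆ (Finset.univ.erase (0 : ZMod p)).image φ := by
          intro u hu
          exact hcompl u (Finset.mem_compl.1 hu)
        have hle1 : ((Sset p a)ᶜ).card ≤ ((Finset.univ.erase (0 : ZMod p)).image φ).card :=
          Finset.card_le_card hcompl'
        have hle2 : ((Sset p a)ᶜ).card = p - (Sset p a).card := by
          rw [Finset.card_compl, hcard]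
        have hle3 : (Sset p a).card ≤ p := by
          have := Finset.card_le_univ (Sset p a)
          omega
        omega

end Count

end FieldPart

lemma ordi_emb {p : ℕ} (i : Fin 3) (a : ZMod p) (w : ZMod p × ZMod p) :
    ordi p i (emb i a w) = sInf {n | 0 < n ∧ (step a)^[n] w = w} := by
  unfold ordi
  congr 1
  ext n
  simp only [Set.mem_setOf_eq, rot_iterate_emb]
  exact and_congr_right fun _ => ⟨fun h => emb_inj i a h, fun h => by rw [h]⟩

lemma exists_third : ∀ i j : Fin 3, ∃ k : Fin 3, k ≠ i ∧ k ≠ j := by decide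

lemma good_swap {F : Type*} [CommRing F] {a c v : F} (h : Good a (c, v)) : Good a (v, c) := by
  have hcv : c ^ 2 + v ^ 2 + a ^ 2 = 3 * a * c * v := h.1
  constructor
  · show v ^ 2 + c ^ 2 + a ^ 2 = 3 * a * v * c
    linear_combination hcv
  · rintro ⟨ha0, hvc⟩
    simp only [Prod.ext_iff, Prod.fst_zero, Prod.snd_zero] at hvc
    exact h.2 ⟨ha0, by simp [Prod.ext_iff, hvc.1, hvc.2]⟩

lemma exists_pair {p : ℕ} (i k : Fin 3) (hik : k ≠ i) (a c : ZMod p)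
    (h : ∃ v, Good a (c, v)) :
    ∃ w : ZMod p × ZMod p, Good a w ∧ coord k (emb i a w) = c := by
  obtain ⟨v, hv⟩ := h
  fin_cases i <;> fin_cases k
  · exact absurd rfl hik
  · exact ⟨(c, v), hv, rfl⟩
  · exact ⟨(v, c), good_swap hv, rfl⟩
  · exact ⟨(c, v), hv, rfl⟩
  · exact absurd rfl hik
  · exact ⟨(v, c), good_swap hv, rfl⟩
  · exact ⟨(c, v), hv, rfl⟩
  · exact ⟨(v, c), good_swap hv, rfl⟩
  · exact absurd rfl hik



theorem stmt_12 (p : ℕ) (hp : p.Prime) (hp3 : 3 < p)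
    (x y : ZMod p × ZMod p × ZMod p) (i j : Fin 3)
    (hx : x ∈ Cage p) (hy : y ∈ Cage p)
    (hxi : ordp p x = ordi p i x ∧
      (ordi p i x = p - 1 ∨ ordi p i x = p + 1 ∨ ordi p i x = 2 * p))
    (hyj : ordp p y = ordi p j y ∧
      (ordi p j y = p - 1 ∨ ordi p j y = p + 1 ∨ ordi p j y = 2 * p)) :
    ∃ z ∈ Cage p, ∃ k : Fin 3,
      (Ci p i (coord i x) ∩ Ci p k (coord k z)).Nonempty ∧
      (Ci p j (coord j y) ∩ Ci p k (coord k z)).Nonempty := by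
  haveI : Fact p.Prime := ⟨hp⟩
  have h2 : (2 : ZMod p) ≠ 0 := two_ne_zero' hp3
  obtain ⟨hxX, hxM⟩ := hx
  obtain ⟨hyX, hyM⟩ := hy
  have hxw : Good (coord i x) (proj i x) := by
    constructor
    · exact (markoff_emb i (coord i x) (proj i x)).1 (by rw [emb_proj]; exact hxX.1)
    · rintro ⟨ha0, hw0⟩
      apply hxX.2
      rw [← emb_proj i x, ha0, hw0]
      exact (emb_eq_zero i 0 0).2 ⟨rfl, rfl⟩
  have hyw : Good (coord j y) (proj j y) := by
    constructor
    · exact (markoff_emb j (coord j y) (proj j y)).1 (by rw [emb_proj]; exact hyX.1)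
    · rintro ⟨ha0, hw0⟩
      apply hyX.2
      rw [← emb_proj j y, ha0, hw0]
      exact (emb_eq_zero j 0 0).2 ⟨rfl, rfl⟩
  have hSa := two_mul_card_Sset hp3 ⟨_, hxw⟩
  have hSb := two_mul_card_Sset hp3 ⟨_, hyw⟩
  have hpig : (Sset p (coord i x) ∩ Sset p (coord j y)).Nonempty := by
    rw [← Finset.card_pos]
    have hcard : Fintype.card (ZMod p) = p := ZMod.card p
    have hu := Finset.card_le_univ (Sset p (coord i x) ∪ Sset p (coord j y))
    have hui := Finset.card_union_add_card_inter (Sset p (coord i x)) (Sset p (coord j y))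
    omega
  obtain ⟨c, hc⟩ := hpig
  rw [Finset.mem_inter, mem_Sset, mem_Sset] at hc
  obtain ⟨k, hki, hkj⟩ := exists_third i j
  obtain ⟨w1, hw1g, hw1c⟩ := exists_pair i k hki (coord i x) c hc.1
  obtain ⟨w2, hw2g, hw2c⟩ := exists_pair j k hkj (coord j y) c hc.2
  have hzX : emb i (coord i x) w1 ∈ Xstar p := by
    constructor
    · exact (markoff_emb _ _ _).2 hw1g.1
    · intro h0
      exact hw1g.2 ((emb_eq_zero _ _ _).1 h0)
  have hzord : ordi p i (emb i (coord i x) w1) = ordi p i x := by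
    have h1 := ordi_emb i (coord i x) w1
    have h2' := ordi_emb i (coord i x) (proj i x)
    rw [emb_proj] at h2'
    rw [h1, periodSet_const h2 hw1g hxw, ← h2']
  have hw2X : emb j (coord j y) w2 ∈ Xstar p := by
    constructor
    · exact (markoff_emb _ _ _).2 hw2g.1
    · intro h0
      exact hw2g.2 ((emb_eq_zero _ _ _).1 h0)
  refine ⟨emb i (coord i x) w1, ⟨hzX, ⟨i, by rw [hzord]; exact hxi.2⟩⟩, k, ?_, ?_⟩
  · exact ⟨emb i (coord i x) w1, ⟨hzX, coord_emb i _ _⟩, ⟨hzX, rfl⟩⟩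
  · exact ⟨emb j (coord j y) w2, ⟨hw2X, coord_emb j _ _⟩,
      ⟨hw2X, by rw [hw2c]; exact hw1c.symm⟩⟩


end Markoff
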